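/- Let X be a finite set with |X| = K ≥ 1, let T be a positive integer, and for each t ∈ {1,…,T} let x_t ∈ X, let m_t be a positive integer with m_t ≤ T, and let w_t ≥ 0 be a real number. Suppose that for every x ∈ X and every integer i ≥ 0, the number of indices t ∈ {1,…,T} with x_t = x and 2^i ≤ m_t ≤ 2^{i+1} − 1 is at most 2^i. Then ∑_{t=1}^T √(w_t/m_t) ≤ √( K·(⌊log₂ T⌋ + 1) · ∑_{t=1}^T w_t ). -/
import Mathlib


open Finset

/-- Weighted dyadic counting lemma: under the same dyadic visitation condition
as the unweighted version, for any nonnegative weights `w_t`,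
`∑_{t=1}^T √(w_t/m_t) ≤ √(K(⌊log₂ T⌋ + 1)·∑_{t=1}^T w_t)`. -/
theorem dyadic_weighted_sqrt_sum
    {X : Type*} [Fintype X] [DecidableEq X] (K : ℕ) (hK : Fintype.card X = K)
    (hK1 : 1 ≤ K) (T : ℕ) (hT : 1 ≤ T)
    (x : ℕ → X) (m : ℕ → ℕ) (w : ℕ → ℝ)
    (hm : ∀ t ∈ Finset.Icc 1 T, 1 ≤ m t ∧ m t ≤ T)
    (hw : ∀ t ∈ Finset.Icc 1 T, 0 ≤ w t)
    (hcount : ∀ x₀ : X, ∀ i : ℕ,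
      ((Finset.Icc 1 T).filter
        (fun t => x t = x₀ ∧ 2 ^ i ≤ m t ∧ m t ≤ 2 ^ (i + 1) - 1)).card ≤ 2 ^ i) :
    ∑ t ∈ Finset.Icc 1 T, Real.sqrt (w t / m t)
      ≤ Real.sqrt ((K * (Nat.log 2 T + 1)) * ∑ t ∈ Finset.Icc 1 T, w t) := by
  set S := Finset.Icc 1 T with hS
  set L := Nat.log 2 T with hL
  have key : ∑ t ∈ S, (1 : ℝ) / m t ≤ (K * (L + 1) : ℝ) := by
    have hmap : ∀ t ∈ S, (x t, Nat.log 2 (m t)) ∈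
        (Finset.univ : Finset X) ×ˢ Finset.range (L + 1) := by
      intro t ht
      simp only [Finset.mem_product, Finset.mem_univ, Finset.mem_range, true_and]
      exact Nat.lt_succ_of_le (Nat.log_mono_right (hm t ht).2)
    rw [← Finset.sum_fiberwise_of_maps_to hmap (fun t => (1 : ℝ) / m t)]
    calc ∑ p ∈ univ ×ˢ range (L + 1),
          ∑ t ∈ S.filter (fun t => (x t, Nat.log 2 (m t)) = p), (1 : ℝ) / m t
        ≤ ∑ _p ∈ univ ×ˢ range (L + 1), (1 : ℝ) := by
          apply Finset.sum_le_sum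
          rintro ⟨x₀, i⟩ _
          have hsub : S.filter (fun t => (x t, Nat.log 2 (m t)) = (x₀, i)) ⊆
              S.filter (fun t => x t = x₀ ∧ 2 ^ i ≤ m t ∧ m t ≤ 2 ^ (i + 1) - 1) := by
            intro t ht
            simp only [Finset.mem_filter, Prod.mk.injEq] at ht ⊢
            obtain ⟨htS, hx, hi⟩ := ht
            have hm1 := (hm t htS).1
            refine ⟨htS, hx, ?_, ?_⟩
            · rw [← hi]; exact Nat.pow_log_le_self 2 (by omega)
            · have := Nat.lt_pow_succ_log_self (b := 2) (by norm_num) (m t)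
              rw [hi] at this; omega
          have hcard : (S.filter (fun t => (x t, Nat.log 2 (m t)) = (x₀, i))).card ≤ 2 ^ i :=
            le_trans (Finset.card_le_card hsub) (hcount x₀ i)
          calc ∑ t ∈ S.filter (fun t => (x t, Nat.log 2 (m t)) = (x₀, i)), (1 : ℝ) / m t
              ≤ ∑ _t ∈ S.filter (fun t => (x t, Nat.log 2 (m t)) = (x₀, i)), (1 : ℝ) / 2 ^ i := by
                apply Finset.sum_le_sum
                intro t ht
                simp only [Finset.mem_filter, Prod.mk.injEq] at ht
                have h1 : 2 ^ i ≤ m t := by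
                  have := Nat.pow_log_le_self 2 (show m t ≠ 0 by have := (hm t ht.1).1; omega)
                  rw [ht.2.2] at this; exact this
                have h2 : (2 : ℝ) ^ i ≤ (m t : ℝ) := by exact_mod_cast h1
                exact one_div_le_one_div_of_le (by positivity) h2
            _ = (S.filter (fun t => (x t, Nat.log 2 (m t)) = (x₀, i))).card * ((1 : ℝ) / 2 ^ i) := by
                rw [Finset.sum_const, nsmul_eq_mul]
            _ ≤ (2 : ℝ) ^ i * ((1 : ℝ) / 2 ^ i) := by
                apply mul_le_mul_of_nonneg_right _ (by positivity)
                exact_mod_cast hcard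
            _ = 1 := by field_simp
      _ = (K * (L + 1) : ℝ) := by
          rw [Finset.sum_const, Finset.card_product, Finset.card_univ, hK, Finset.card_range]
          push_cast; ring
  have hwsum : 0 ≤ ∑ t ∈ S, w t := Finset.sum_nonneg hw
  have hsplit : ∀ t ∈ S, Real.sqrt (w t / m t)
      = Real.sqrt (1 / m t) * Real.sqrt (w t) := by
    intro t ht
    rw [← Real.sqrt_mul (by positivity) (w t), one_div_mul_eq_div]
  rw [Finset.sum_congr rfl hsplit]
  have hnn : 0 ≤ ∑ t ∈ S, Real.sqrt (1 / m t) * Real.sqrt (w t) :=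
    Finset.sum_nonneg fun t ht => mul_nonneg (Real.sqrt_nonneg _) (Real.sqrt_nonneg _)
  rw [Real.le_sqrt hnn (mul_nonneg (by positivity) hwsum)]
  calc (∑ t ∈ S, Real.sqrt (1 / m t) * Real.sqrt (w t)) ^ 2
      ≤ (∑ t ∈ S, Real.sqrt (1 / m t) ^ 2) * ∑ t ∈ S, Real.sqrt (w t) ^ 2 :=
        Finset.sum_mul_sq_le_sq_mul_sq S _ _
    _ = (∑ t ∈ S, (1 : ℝ) / m t) * ∑ t ∈ S, w t := by
        congr 1
        · exact Finset.sum_congr rfl fun t ht => Real.sq_sqrt (by positivity)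
        · exact Finset.sum_congr rfl fun t ht => Real.sq_sqrt (hw t ht)
    _ ≤ (K * (L + 1) : ℝ) * ∑ t ∈ S, w t := by
        exact mul_le_mul_of_nonneg_right key hwsum
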